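/- Let H be a real inner product space and let a : H × H → ℝ be a symmetric bilinear form with a(v, v) ≥ C·μ·‖v‖² and |a(w, v)| ≤ C'·μ·‖w‖·‖v‖ for all v, w ∈ H, where C, C', μ > 0. Suppose e ∈ H and b : H × Q → ℝ is a bilinear map (Q a normed space) and p ∈ Q satisfy a(e, v) + b(v, p) = 0 for all v ∈ H, and the inf-sup condition C₀·‖p‖_Q ≤ sup_{0≠v∈H} b(v, p)/‖v‖ holds with C₀ > 0. Then ‖p‖_Q ≤ (C'/C₀)·μ^{1/2}·C^{-1/2}·a(e, e)^{1/2}. -/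
import Mathlib


theorem total_pressure_error_bound {H Q : Type*}
    [NormedAddCommGroup H] [InnerProductSpace ℝ H] [NormedAddCommGroup Q] [NormedSpace ℝ Q]
    (a : H → H → ℝ) (hsymm : ∀ v w : H, a v w = a w v)
    (C C' μ : ℝ) (hC : 0 < C) (hC' : 0 < C') (hμ : 0 < μ)
    (hcoer : ∀ v : H, a v v ≥ C * μ * ‖v‖ ^ 2)
    (hcont : ∀ w v : H, |a w v| ≤ C' * μ * ‖w‖ * ‖v‖)
    (b : H →ₗ[ℝ] Q →ₗ[ℝ] ℝ) (e : H) (p : Q)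
    (herr : ∀ v : H, a e v + b v p = 0)
    (C₀ : ℝ) (hC₀ : 0 < C₀)
    (hinfsup : C₀ * ‖p‖ ≤ ⨆ v : {v : H // v ≠ 0}, b v.1 p / ‖v.1‖) :
    ‖p‖ ≤ (C' / C₀) * Real.sqrt μ / Real.sqrt C * Real.sqrt (a e e) := by
  have haee : 0 ≤ a e e := le_trans (by positivity) (hcoer e)
  have hSnn : 0 ≤ Real.sqrt (a e e) := Real.sqrt_nonneg _
  have hsC : 0 < Real.sqrt C := Real.sqrt_pos.mpr hC
  have hsμ : 0 < Real.sqrt μ := Real.sqrt_pos.mpr hμ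
  have hRHSnn : 0 ≤ (C' / C₀) * Real.sqrt μ / Real.sqrt C * Real.sqrt (a e e) := by
    positivity
  by_cases hne : Nonempty {v : H // v ≠ 0}
  · -- sup bound
    have hsup : (⨆ v : {v : H // v ≠ 0}, b v.1 p / ‖v.1‖) ≤ C' * μ * ‖e‖ := by
      apply ciSup_le
      intro ⟨v, hv⟩
      have hvn : 0 < ‖v‖ := norm_pos_iff.mpr hv
      have hb : (b v p : ℝ) = -a e v := by linarith [herr v]
      have := hcont e v
      have h1 : b v p ≤ C' * μ * ‖e‖ * ‖v‖ := by
        rw [hb]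
        have := abs_le.mp this
        linarith [this.1]
      rw [div_le_iff₀ hvn] at *
      simpa using h1
    have h2 : C₀ * ‖p‖ ≤ C' * μ * ‖e‖ := le_trans hinfsup hsup
    -- ‖e‖ bound
    have h3 : Real.sqrt C * Real.sqrt μ * ‖e‖ ≤ Real.sqrt (a e e) := by
      have : Real.sqrt (C * μ * ‖e‖ ^ 2) ≤ Real.sqrt (a e e) :=
        Real.sqrt_le_sqrt (hcoer e)
      rw [show C * μ * ‖e‖ ^ 2 = (Real.sqrt C * Real.sqrt μ * ‖e‖) ^ 2 by
            rw [mul_pow, mul_pow, Real.sq_sqrt hC.le, Real.sq_sqrt hμ.le],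
          Real.sqrt_sq (by positivity)] at this
      exact this
    rw [show C' / C₀ * Real.sqrt μ / Real.sqrt C * Real.sqrt (a e e)
          = C' * Real.sqrt μ * Real.sqrt (a e e) / (C₀ * Real.sqrt C) by ring,
        le_div_iff₀ (by positivity)]
    have hμeq : Real.sqrt μ * Real.sqrt μ = μ := Real.mul_self_sqrt hμ.le
    have hA : C₀ * ‖p‖ * Real.sqrt C ≤ C' * μ * ‖e‖ * Real.sqrt C :=
      mul_le_mul_of_nonneg_right h2 hsC.le
    have hB : C' * Real.sqrt μ * (Real.sqrt C * Real.sqrt μ * ‖e‖)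
        ≤ C' * Real.sqrt μ * Real.sqrt (a e e) :=
      mul_le_mul_of_nonneg_left h3 (by positivity)
    have hB' : C' * μ * ‖e‖ * Real.sqrt C ≤ C' * Real.sqrt μ * Real.sqrt (a e e) := by
      calc C' * μ * ‖e‖ * Real.sqrt C
          = C' * Real.sqrt μ * (Real.sqrt C * Real.sqrt μ * ‖e‖) := by
            linear_combination (-(C' * ‖e‖ * Real.sqrt C)) * hμeq
        _ ≤ _ := hB
    linarith
  · have : IsEmpty {v : H // v ≠ 0} := not_nonempty_iff.mp hne
    have h0 : (⨆ v : {v : H // v ≠ 0}, b v.1 p / ‖v.1‖) = 0 := Real.iSup_of_isEmpty _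
    rw [h0] at hinfsup
    have hp : ‖p‖ ≤ 0 := by nlinarith [norm_nonneg p]
    linarith
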